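/- Consider Algorithm 1 option (i) under Assumptions 1 and 2 with each f_i L-smooth. If the local learning rate satisfies η_l ≤ 1/(8KL), then for every round t and every local step k ∈ {1,…,K}, the average local drift satisfies (1/N)∑_{i=1}^N E[‖x_i^{t,k} − x^t‖²] ≤ 5 K η_l² (σ_l² + 6K σ_g²) + 30 K² η_l² E[‖∇f(x^t)‖²]. -/

import Mathlib

open MeasureTheory ProbabilityTheory

/-- The global empirical risk `f = (1/N) ∑ᵢ fᵢ`. -/
noncomputable def globalObjective {E : Type*} (N : ℕ) (f : Fin N → E → ℝ) : E → ℝ :=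
  fun x => (N : ℝ)⁻¹ * ∑ i, f i x


section helpers

variable {Ω : Type*} {m : MeasurableSpace Ω} {μ : Measure Ω} {dd : ℕ}

local notation "E" => EuclideanSpace ℝ (Fin dd)

lemma bld_integrable_sq_norm {f : Ω → E} (hf : MemLp f 2 μ) :
    Integrable (fun ω => ‖f ω‖ ^ 2) μ :=
  (memLp_two_iff_integrable_sq_norm hf.1).mp hf

lemma bld_integrable_inner {f h : Ω → E} (hf : MemLp f 2 μ) (hh : MemLp h 2 μ) :
    Integrable (fun ω => (inner ℝ (f ω) (h ω) : ℝ)) μ := by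
  refine Integrable.mono' (((bld_integrable_sq_norm hf).add (bld_integrable_sq_norm hh)).const_mul
    (1/2 : ℝ)) (hf.1.inner hh.1) (Filter.Eventually.of_forall fun ω => ?_)
  have h1 := abs_real_inner_le_norm (f ω) (h ω)
  have h2 : ‖f ω‖ * ‖h ω‖ ≤ (1/2) * (‖f ω‖^2 + ‖h ω‖^2) := by nlinarith [sq_nonneg (‖f ω‖ - ‖h ω‖)]
  simp only [Pi.add_apply]
  calc ‖(inner ℝ (f ω) (h ω) : ℝ)‖ = |(inner ℝ (f ω) (h ω) : ℝ)| := rfl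
  _ ≤ ‖f ω‖ * ‖h ω‖ := h1
  _ ≤ _ := h2

lemma bld_integrable_mul {f h : Ω → ℝ} (hf : MemLp f 2 μ) (hh : MemLp h 2 μ) :
    Integrable (fun ω => f ω * h ω) μ := by
  refine Integrable.mono' ((hf.integrable_sq.add hh.integrable_sq).const_mul (1/2 : ℝ))
    (hf.1.mul hh.1) (Filter.Eventually.of_forall fun ω => ?_)
  have : ‖f ω * h ω‖ = |f ω * h ω| := rfl
  rw [this, abs_mul]
  simp only [Pi.add_apply]
  nlinarith [sq_nonneg (|f ω| - |h ω|), sq_abs (f ω), sq_abs (h ω), abs_nonneg (f ω), abs_nonneg (h ω)]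


lemma bld_cont_of_lip (φ : E → E) {L : ℝ} (hL : 0 ≤ L)
    (hφ : ∀ x y, ‖φ x - φ y‖ ≤ L * ‖x - y‖) : Continuous φ := by
  have hlip : LipschitzWith (Real.toNNReal L) φ := by
    refine LipschitzWith.of_dist_le_mul fun a b => ?_
    rw [dist_eq_norm, dist_eq_norm]
    calc ‖φ a - φ b‖ ≤ L * ‖a - b‖ := hφ a b
    _ = (Real.toNNReal L : ℝ) * ‖a - b‖ := by rw [Real.coe_toNNReal L hL]
  exact hlip.continuous

lemma bld_memL2_comp_lipschitz [IsFiniteMeasure μ]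
    (φ : E → E) {L : ℝ} (hL : 0 ≤ L)
    (hφ : ∀ x y, ‖φ x - φ y‖ ≤ L * ‖x - y‖)
    {x : Ω → E} (hx : MemLp x 2 μ) :
    MemLp (fun ω => φ (x ω)) 2 μ := by
  have hlip : LipschitzWith (Real.toNNReal L) φ := by
    refine LipschitzWith.of_dist_le_mul fun a b => ?_
    rw [dist_eq_norm, dist_eq_norm]
    calc ‖φ a - φ b‖ ≤ L * ‖a - b‖ := hφ a b
    _ = (Real.toNNReal L : ℝ) * ‖a - b‖ := by rw [Real.coe_toNNReal L hL]
  have haesm : AEStronglyMeasurable (fun ω => φ (x ω)) μ :=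
    hlip.continuous.comp_aestronglyMeasurable hx.1
  have hbound : MemLp (fun ω => ‖φ 0‖ + L * ‖x ω‖) 2 μ :=
    (memLp_const (‖φ 0‖)).add ((hx.norm).const_mul L)
  refine MemLp.of_le hbound haesm (Filter.Eventually.of_forall fun ω => ?_)
  have h1 : ‖φ (x ω)‖ ≤ ‖φ 0‖ + L * ‖x ω‖ := by
    have := hφ (x ω) 0
    have h2 := norm_sub_norm_le (φ (x ω)) (φ 0)
    simp only [sub_zero] at this
    linarith
  calc ‖φ (x ω)‖ ≤ ‖φ 0‖ + L * ‖x ω‖ := h1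
  _ ≤ |‖φ 0‖ + L * ‖x ω‖| := le_abs_self _
  _ = ‖‖φ 0‖ + L * ‖x ω‖‖ := (Real.norm_eq_abs _).symm

end helpers

section cross

variable {Ω : Type*} {𝓕 m : MeasurableSpace Ω} {μ : Measure Ω} {dd : ℕ}

local notation "E" => EuclideanSpace ℝ (Fin dd)

lemma bld_cross_zero [IsProbabilityMeasure μ] (h𝓕 : 𝓕 ≤ m)
    {A Z : Ω → E}
    (hA : StronglyMeasurable[𝓕] A) (hA2 : MemLp A 2 μ) (hZ2 : MemLp Z 2 μ)
    (hZ : μ[Z|𝓕] =ᵐ[μ] 0) :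
    ∫ ω, (inner ℝ (A ω) (Z ω) : ℝ) ∂μ = 0 := by
  haveI : SigmaFinite (μ.trim h𝓕) := inferInstance
  have hZint : Integrable Z μ := hZ2.integrable one_le_two
  -- componentwise conditional expectation is zero
  have hcomp : ∀ c : Fin dd, μ[fun ω => Z ω c|𝓕] =ᵐ[μ] 0 := by
    intro c
    have hZc_int : Integrable (fun ω => Z ω c) μ := by
      have := (EuclideanSpace.proj c : E →L[ℝ] ℝ).integrable_comp hZint
      exact this
    have hset : ∀ s : Set Ω, MeasurableSet[𝓕] s → μ s < ⊤ →
        ∫ ω in s, (0 : ℝ) ∂μ = ∫ ω in s, Z ω c ∂μ := by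
      intro s hs _
      have hZs : ∫ ω in s, Z ω ∂μ = 0 := by
        have h1 : ∫ ω in s, (μ[Z|𝓕]) ω ∂μ = ∫ ω in s, Z ω ∂μ := setIntegral_condExp h𝓕 hZint hs
        have h2 : ∫ ω in s, (μ[Z|𝓕]) ω ∂μ = ∫ ω in s, (0 : E) ∂μ :=
          setIntegral_congr_ae (h𝓕 s hs) (hZ.mono fun ω hω _ => by simpa using hω)
        rw [← h1, h2, integral_zero]
      have : ∫ ω in s, Z ω c ∂μ = (EuclideanSpace.proj c : E →L[ℝ] ℝ) (∫ ω in s, Z ω ∂μ) :=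
        (EuclideanSpace.proj c : E →L[ℝ] ℝ).integral_comp_comm hZint.integrableOn
      rw [this, hZs]
      simp
    have := ae_eq_condExp_of_forall_setIntegral_eq h𝓕 hZc_int
      (fun s _ _ => integrableOn_zero) hset
      (StronglyMeasurable.aestronglyMeasurable (@stronglyMeasurable_const Ω ℝ 𝓕 _ 0))
    exact this.symm
  -- expand the inner product in coordinates
  have hexp : ∫ ω, (inner ℝ (A ω) (Z ω) : ℝ) ∂μ = ∑ c : Fin dd, ∫ ω, A ω c * Z ω c ∂μ := by
    rw [← integral_finset_sum]
    · refine integral_congr_ae (Filter.Eventually.of_forall fun ω => ?_)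
      simp [PiLp.inner_apply, RCLike.inner_apply, mul_comm]
    · intro c _
      exact bld_integrable_mul ((EuclideanSpace.proj c : E →L[ℝ] ℝ).comp_memLp' hA2)
        ((EuclideanSpace.proj c : E →L[ℝ] ℝ).comp_memLp' hZ2)
  rw [hexp]
  refine Finset.sum_eq_zero fun c _ => ?_
  have hAc : StronglyMeasurable[𝓕] (fun ω => A ω c) :=
    (EuclideanSpace.proj c : E →L[ℝ] ℝ).continuous.comp_stronglyMeasurable hA
  have hmul_int : Integrable (fun ω => A ω c * Z ω c) μ :=
    bld_integrable_mul ((EuclideanSpace.proj c : E →L[ℝ] ℝ).comp_memLp' hA2)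
      ((EuclideanSpace.proj c : E →L[ℝ] ℝ).comp_memLp' hZ2)
  have hZc_int : Integrable (fun ω => Z ω c) μ :=
    (EuclideanSpace.proj c : E →L[ℝ] ℝ).integrable_comp hZint
  have hpull := condExp_mul_of_stronglyMeasurable_left (μ := μ) hAc
    (by exact hmul_int) hZc_int
  calc ∫ ω, A ω c * Z ω c ∂μ = ∫ ω, (μ[(fun ω => A ω c) * (fun ω => Z ω c)|𝓕]) ω ∂μ := by
        rw [integral_condExp h𝓕]; rfl
  _ = ∫ ω, ((fun ω => A ω c) * μ[fun ω => Z ω c|𝓕]) ω ∂μ := integral_congr_ae hpull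
  _ = 0 := by
      have h0 : (fun ω => A ω c) * μ[fun ω => Z ω c|𝓕] =ᵐ[μ] (fun _ => (0:ℝ)) :=
        (hcomp c).mono fun ω hω => by
          simp only [Pi.mul_apply]
          simp only [Pi.zero_apply] at hω
          rw [hω, mul_zero]
      rw [integral_congr_ae h0, integral_zero]

end cross

section grad

variable {dd N : ℕ}

local notation "E" => EuclideanSpace ℝ (Fin dd)

lemma bld_gradient_global (f : Fin N → E → ℝ) (hdiff : ∀ i, Differentiable ℝ (f i)) (x : E) :
    gradient (globalObjective N f) x = (N:ℝ)⁻¹ • ∑ i, gradient (f i) x := by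
  have h1 : ∀ i ∈ Finset.univ, HasFDerivAt (f i)
      ((InnerProductSpace.toDual ℝ (EuclideanSpace ℝ (Fin dd))) (gradient (f i) x)) x :=
    fun i _ => (hasGradientAt_iff_hasFDerivAt.mp ((hdiff i).differentiableAt.hasGradientAt))
  have h2 : HasFDerivAt (fun y => (N:ℝ)⁻¹ * ∑ i, f i y)
      ((N:ℝ)⁻¹ • ∑ i, (InnerProductSpace.toDual ℝ (EuclideanSpace ℝ (Fin dd)))
        (gradient (f i) x)) x :=
    (HasFDerivAt.fun_sum h1).const_mul _
  have h3 : HasGradientAt (globalObjective N f) ((N:ℝ)⁻¹ • ∑ i, gradient (f i) x) x := by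
    rw [hasGradientAt_iff_hasFDerivAt]
    rw [_root_.map_smul, map_sum]
    exact h2
  exact h3.gradient

lemma bld_global_smooth (f : Fin N → E → ℝ) (hdiff : ∀ i, Differentiable ℝ (f i))
    {L : ℝ} (hL : 0 ≤ L)
    (hsmooth : ∀ i x y, ‖gradient (f i) x - gradient (f i) y‖ ≤ L * ‖x - y‖) (x y : E) :
    ‖gradient (globalObjective N f) x - gradient (globalObjective N f) y‖ ≤ L * ‖x - y‖ := by
  rcases Nat.eq_zero_or_pos N with hN | hN
  · subst hN
    simp [bld_gradient_global f hdiff]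
    positivity
  rw [bld_gradient_global f hdiff x, bld_gradient_global f hdiff y, ← smul_sub,
    ← Finset.sum_sub_distrib, norm_smul]
  have h1 : ‖∑ i, (gradient (f i) x - gradient (f i) y)‖ ≤ (N:ℝ) * (L * ‖x - y‖) := by
    refine le_trans (norm_sum_le _ _) ?_
    calc ∑ i : Fin N, ‖gradient (f i) x - gradient (f i) y‖ ≤ ∑ _i : Fin N, L * ‖x - y‖ :=
          Finset.sum_le_sum fun i _ => hsmooth i x y
    _ = (N:ℝ) * (L * ‖x - y‖) := by simp [Finset.sum_const, mul_comm]
  have hN0 : (0:ℝ) < N := by exact_mod_cast hN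
  calc ‖(N:ℝ)⁻¹‖ * ‖∑ i, (gradient (f i) x - gradient (f i) y)‖
      ≤ (N:ℝ)⁻¹ * ((N:ℝ) * (L * ‖x - y‖)) := by
        rw [Real.norm_eq_abs, abs_of_nonneg (by positivity)]
        exact mul_le_mul_of_nonneg_left h1 (by positivity)
  _ = L * ‖x - y‖ := by field_simp
  
end grad

lemma bld_peter_paul {x g r t TK : ℝ} (ht0 : 0 < t) (hTK : TK = 1 + t⁻¹)
    (hr : |r| ≤ x * g) :
    x ^ 2 - 2 * r + g ^ 2 ≤ (1 + t) * x ^ 2 + TK * g ^ 2 := by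
  have h3 : 0 < t⁻¹ := inv_pos.mpr ht0
  have key : t⁻¹ * (t * x - g) ^ 2 = t * x ^ 2 - 2 * (x * g) + t⁻¹ * g ^ 2 := by
    field_simp
    ring
  have h2 : 2 * (x * g) ≤ t * x ^ 2 + t⁻¹ * g ^ 2 := by
    nlinarith [mul_nonneg h3.le (sq_nonneg (t * x - g)), key]
  have h5 : -r ≤ |r| := neg_le_abs r
  rw [hTK]
  nlinarith [h2, h5, hr]

lemma bld_three_sq {gn A B C : ℝ} (hgn : 0 ≤ gn) (h : gn ≤ A + B + C)
    (hA : 0 ≤ A) (hB : 0 ≤ B) (hC : 0 ≤ C) :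
    gn ^ 2 ≤ 3 * A ^ 2 + 3 * B ^ 2 + 3 * C ^ 2 := by
  have h1 : gn ^ 2 ≤ (A + B + C) ^ 2 := by nlinarith
  nlinarith [sq_nonneg (A - B), sq_nonneg (A - C), sq_nonneg (B - C)]

set_option maxHeartbeats 1000000 in
/-- **Bounded local drift (Lemma 2, following Reddi et al.).**
Consider one round of Algorithm 1 option (i): each client `i` starts from the global model
`x⁰` and performs `K` local SGD steps `x_i^{k+1} = x_i^k − η_l g_i^k`, where the stochastic
gradients satisfy Assumption 1 (conditional unbiasedness `E[g_i^k | 𝓕_k] = ∇f_i(x_i^k)` and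
variance bound `E‖g_i^k − ∇f_i(x_i^k)‖² ≤ σ_l²`) and Assumption 2 (heterogeneity
`‖∇f_i − ∇f‖² ≤ σ_g²`), with each `f_i` `L`-smooth.  If `η_l ≤ 1/(8KL)`, then for every
`k ∈ {1, …, K}`, `(1/N) ∑ᵢ E‖x_i^k − x⁰‖² ≤ 5Kη_l²(σ_l² + 6Kσ_g²) + 30K²η_l² E‖∇f(x⁰)‖²`. -/
theorem bounded_local_drift
    {dd N K : ℕ} (hN : 0 < N) (hK : 0 < K)
    {Ω : Type*} [m : MeasurableSpace Ω] (μ : Measure Ω) [IsProbabilityMeasure μ]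
    (f : Fin N → EuclideanSpace ℝ (Fin dd) → ℝ) (L σl σg ηl : ℝ) (hL : 0 < L)
    (hdiff : ∀ i, Differentiable ℝ (f i))
    (hsmooth : ∀ i x y, ‖gradient (f i) x - gradient (f i) y‖ ≤ L * ‖x - y‖)
    (hA2 : ∀ i x, ‖gradient (f i) x - gradient (globalObjective N f) x‖ ^ 2 ≤ σg ^ 2)
    (hηl_pos : 0 < ηl) (hηl : ηl ≤ 1 / (8 * K * L))
    (x0 : Ω → EuclideanSpace ℝ (Fin dd))
    (xloc : Fin N → ℕ → Ω → EuclideanSpace ℝ (Fin dd))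
    (g : Fin N → ℕ → Ω → EuclideanSpace ℝ (Fin dd))
    (𝓕 : ℕ → MeasurableSpace Ω) (h𝓕_le : ∀ k, 𝓕 k ≤ m) (h𝓕_mono : Monotone 𝓕)
    (hx0_meas : StronglyMeasurable[𝓕 0] x0) (hx0_L2 : MemLp x0 2 μ)
    (hxloc_meas : ∀ i k, StronglyMeasurable[𝓕 k] (xloc i k))
    (hxloc_L2 : ∀ i k, MemLp (xloc i k) 2 μ)
    (hg_L2 : ∀ i k, MemLp (g i k) 2 μ)
    (hinit : ∀ i, xloc i 0 = x0)
    (hupdate : ∀ i k ω, xloc i (k + 1) ω = xloc i k ω - ηl • g i k ω)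
    (hA1_unbiased : ∀ i k, μ[g i k|𝓕 k] =ᵐ[μ] fun ω => gradient (f i) (xloc i k ω))
    (hA1_var : ∀ i k, ∫ ω, ‖g i k ω - gradient (f i) (xloc i k ω)‖ ^ 2 ∂μ ≤ σl ^ 2) :
    ∀ k, 1 ≤ k → k ≤ K →
      (N : ℝ)⁻¹ * ∑ i, ∫ ω, ‖xloc i k ω - x0 ω‖ ^ 2 ∂μ ≤
        5 * K * ηl ^ 2 * (σl ^ 2 + 6 * K * σg ^ 2)
          + 30 * K ^ 2 * ηl ^ 2 * ∫ ω, ‖gradient (globalObjective N f) (x0 ω)‖ ^ 2 ∂μ := by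
  classical
  have hKR : (1:ℝ) ≤ K := by exact_mod_cast hK
  have hNR : (0:ℝ) < N := by exact_mod_cast hN
  set F := globalObjective N f with hFdef
  have hgradF_lip : ∀ x y, ‖gradient F x - gradient F y‖ ≤ L * ‖x - y‖ :=
    bld_global_smooth f hdiff hL.le hsmooth
  have hA2' : ∀ i x, ‖gradient (f i) x - gradient F x‖ ≤ |σg| := by
    intro i x
    have h := hA2 i x
    nlinarith [norm_nonneg (gradient (f i) x - gradient F x), abs_nonneg σg, sq_abs σg]
  -- L² membership facts
  have hX_L2 : ∀ i k, MemLp (fun ω => xloc i k ω - x0 ω) 2 μ :=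
    fun i k => (hxloc_L2 i k).sub hx0_L2
  have hG_L2 : ∀ i k, MemLp (fun ω => gradient (f i) (xloc i k ω)) 2 μ :=
    fun i k => bld_memL2_comp_lipschitz (gradient (f i)) hL.le (hsmooth i) (hxloc_L2 i k)
  have hGF_L2 : MemLp (fun ω => gradient F (x0 ω)) 2 μ :=
    bld_memL2_comp_lipschitz (gradient F) hL.le hgradF_lip hx0_L2
  have hZ_L2 : ∀ i k, MemLp (fun ω => g i k ω - gradient (f i) (xloc i k ω)) 2 μ :=
    fun i k => (hg_L2 i k).sub (hG_L2 i k)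
  set GFI := ∫ ω, ‖gradient F (x0 ω)‖ ^ 2 ∂μ with hGFIdef
  have hGFI0 : 0 ≤ GFI := integral_nonneg fun ω => sq_nonneg _
  set a : Fin N → ℕ → ℝ := fun i k => ∫ ω, ‖xloc i k ω - x0 ω‖ ^ 2 ∂μ with hadef
  have ha0 : ∀ i k, 0 ≤ a i k := fun i k => integral_nonneg fun ω => sq_nonneg _
  have h2K1 : (0:ℝ) < 2 * K - 1 := by linarith
  set t : ℝ := (2 * (K:ℝ) - 1)⁻¹ with htdef
  have ht0 : 0 < t := inv_pos.mpr h2K1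
  have ht1 : t ≤ 1 := by
    rw [htdef]
    rw [inv_le_one_iff₀]
    right; linarith
  have htinv : t⁻¹ = 2 * (K:ℝ) - 1 := by rw [htdef, inv_inv]
  -- one-step recursion
  have hstep : ∀ i k, a i (k + 1) ≤
      (1 + t + 6 * K * ηl ^ 2 * L ^ 2) * a i k
        + (ηl ^ 2 * σl ^ 2 + 6 * K * ηl ^ 2 * σg ^ 2 + 6 * K * ηl ^ 2 * GFI) := by
    intro i k
    set X : Ω → EuclideanSpace ℝ (Fin dd) := fun ω => xloc i k ω - x0 ω with hXdef
    set Gc : Ω → EuclideanSpace ℝ (Fin dd) := fun ω => gradient (f i) (xloc i k ω) with hGcdef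
    set Z : Ω → EuclideanSpace ℝ (Fin dd) := fun ω => g i k ω - Gc ω with hZdef
    set A : Ω → EuclideanSpace ℝ (Fin dd) := fun ω => X ω - ηl • Gc ω with hAdef
    have hXm : StronglyMeasurable[𝓕 k] X :=
      (hxloc_meas i k).sub (hx0_meas.mono (h𝓕_mono (Nat.zero_le k)))
    have hGm : StronglyMeasurable[𝓕 k] Gc :=
      (bld_cont_of_lip (gradient (f i)) hL.le (hsmooth i)).comp_stronglyMeasurable
        (hxloc_meas i k)
    have hAm : StronglyMeasurable[𝓕 k] A := hXm.sub (hGm.const_smul ηl)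
    have hA2m : MemLp A 2 μ := (hX_L2 i k).sub ((hG_L2 i k).const_smul ηl)
    have hGint : Integrable Gc μ := (hG_L2 i k).integrable one_le_two
    have hgint : Integrable (g i k) μ := (hg_L2 i k).integrable one_le_two
    have hcondZ : μ[Z|𝓕 k] =ᵐ[μ] 0 := by
      have h1 : μ[Z|𝓕 k] =ᵐ[μ] μ[g i k|𝓕 k] - μ[Gc|𝓕 k] := condExp_sub hgint hGint (𝓕 k)
      have h2 : μ[Gc|𝓕 k] = Gc := condExp_of_stronglyMeasurable (h𝓕_le k) hGm hGint
      refine h1.trans ?_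
      rw [h2]
      filter_upwards [hA1_unbiased i k] with ω hω1
      simp only [Pi.sub_apply, Pi.zero_apply, hω1, hGcdef]
      simp
    have hcross : ∫ ω, (inner ℝ (A ω) (Z ω) : ℝ) ∂μ = 0 :=
      bld_cross_zero (h𝓕_le k) hAm hA2m (hZ_L2 i k) hcondZ
    have hXk1 : ∀ ω, xloc i (k + 1) ω - x0 ω = A ω - ηl • Z ω := by
      intro ω
      rw [hupdate i k ω]
      simp only [hAdef, hXdef, hZdef, smul_sub]
      abel
    have hintA2 : Integrable (fun ω => ‖A ω‖ ^ 2) μ := bld_integrable_sq_norm hA2m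
    have hintZ2 : Integrable (fun ω => ‖Z ω‖ ^ 2) μ := bld_integrable_sq_norm (hZ_L2 i k)
    have hintX2 : Integrable (fun ω => ‖X ω‖ ^ 2) μ := bld_integrable_sq_norm (hX_L2 i k)
    have hintG2 : Integrable (fun ω => ‖Gc ω‖ ^ 2) μ := bld_integrable_sq_norm (hG_L2 i k)
    have hintGF2 : Integrable (fun ω => ‖gradient F (x0 ω)‖ ^ 2) μ :=
      bld_integrable_sq_norm hGF_L2
    have hintAZ : Integrable (fun ω => (inner ℝ (A ω) (Z ω) : ℝ)) μ :=
      bld_integrable_inner hA2m (hZ_L2 i k)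
    -- expansion
    have hexpand : a i (k + 1) = (∫ ω, ‖A ω‖ ^ 2 ∂μ) + ηl ^ 2 * ∫ ω, ‖Z ω‖ ^ 2 ∂μ := by
      have hpt : ∀ ω, ‖xloc i (k + 1) ω - x0 ω‖ ^ 2 =
          ‖A ω‖ ^ 2 - (2 * ηl) * (inner ℝ (A ω) (Z ω) : ℝ) + ηl ^ 2 * ‖Z ω‖ ^ 2 := by
        intro ω
        rw [hXk1 ω, norm_sub_sq_real, real_inner_smul_right, norm_smul]
        simp only [Real.norm_eq_abs, mul_pow, sq_abs]
        ring
      have : a i (k + 1) = ∫ ω, (‖A ω‖ ^ 2 - (2 * ηl) * (inner ℝ (A ω) (Z ω) : ℝ)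
          + ηl ^ 2 * ‖Z ω‖ ^ 2) ∂μ := by
        rw [hadef]
        exact integral_congr_ae (Filter.Eventually.of_forall fun ω => hpt ω)
      have hI1 : Integrable (fun ω => (2 * ηl) * (inner ℝ (A ω) (Z ω) : ℝ)) μ :=
        hintAZ.const_mul _
      have hI2 : Integrable (fun ω => ‖A ω‖ ^ 2 - (2 * ηl) * (inner ℝ (A ω) (Z ω) : ℝ)) μ :=
        hintA2.sub hI1
      have hI3 : Integrable (fun ω => ηl ^ 2 * ‖Z ω‖ ^ 2) μ := hintZ2.const_mul _
      rw [this, integral_add hI2 hI3, integral_sub hintA2 hI1,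
        integral_const_mul, integral_const_mul, hcross]
      ring
    have hZvar : ∫ ω, ‖Z ω‖ ^ 2 ∂μ ≤ σl ^ 2 := hA1_var i k
    -- Young/peter-paul bound on ‖A‖²
    have hAbound : ∫ ω, ‖A ω‖ ^ 2 ∂μ ≤
        (1 + t) * a i k + (2 * K) * ηl ^ 2 * ∫ ω, ‖Gc ω‖ ^ 2 ∂μ := by
      have hTK2K : 2 * (K:ℝ) = 1 + t⁻¹ := by rw [htinv]; ring
      have hpt : ∀ ω, ‖A ω‖ ^ 2 ≤ (1 + t) * ‖X ω‖ ^ 2 + (2 * K) * ηl ^ 2 * ‖Gc ω‖ ^ 2 := by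
        intro ω
        have hns : ‖X ω - ηl • Gc ω‖ ^ 2 = ‖X ω‖ ^ 2 - 2 * (inner ℝ (X ω) (ηl • Gc ω) : ℝ)
            + ‖ηl • Gc ω‖ ^ 2 := norm_sub_sq_real _ _
        have hpp := bld_peter_paul (r := (inner ℝ (X ω) (ηl • Gc ω) : ℝ)) ht0 hTK2K
          (abs_real_inner_le_norm (X ω) (ηl • Gc ω))
        have hsm : ‖ηl • Gc ω‖ ^ 2 = ηl ^ 2 * ‖Gc ω‖ ^ 2 := by
          rw [norm_smul, Real.norm_eq_abs, mul_pow, sq_abs]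
        rw [hsm] at hns hpp
        have hAeq : ‖A ω‖ ^ 2 = ‖X ω - ηl • Gc ω‖ ^ 2 := by rw [hAdef]
        rw [hAeq, hns]
        linarith [hpp]
      calc ∫ ω, ‖A ω‖ ^ 2 ∂μ
          ≤ ∫ ω, ((1 + t) * ‖X ω‖ ^ 2 + (2 * K) * ηl ^ 2 * ‖Gc ω‖ ^ 2) ∂μ :=
            integral_mono hintA2 ((hintX2.const_mul _).add (hintG2.const_mul _)) hpt
      _ = (1 + t) * a i k + (2 * K) * ηl ^ 2 * ∫ ω, ‖Gc ω‖ ^ 2 ∂μ := by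
            rw [integral_add (hintX2.const_mul _) (hintG2.const_mul _),
              integral_const_mul, integral_const_mul, hadef]
    -- gradient bound
    have hGbound : ∫ ω, ‖Gc ω‖ ^ 2 ∂μ ≤ 3 * L ^ 2 * a i k + 3 * σg ^ 2 + 3 * GFI := by
      have hpt : ∀ ω, ‖Gc ω‖ ^ 2 ≤
          3 * L ^ 2 * ‖X ω‖ ^ 2 + 3 * σg ^ 2 + 3 * ‖gradient F (x0 ω)‖ ^ 2 := by
        intro ω
        have h1 : ‖Gc ω‖ ≤ L * ‖X ω‖ + |σg| + ‖gradient F (x0 ω)‖ := by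
          have htri : ‖Gc ω‖ ≤ ‖gradient (f i) (xloc i k ω) - gradient (f i) (x0 ω)‖
              + ‖gradient (f i) (x0 ω) - gradient F (x0 ω)‖ + ‖gradient F (x0 ω)‖ := by
            have := norm_add₃_le (a := gradient (f i) (xloc i k ω) - gradient (f i) (x0 ω))
              (b := gradient (f i) (x0 ω) - gradient F (x0 ω)) (c := gradient F (x0 ω))
            simpa [hGcdef] using this
          have h2 := hsmooth i (xloc i k ω) (x0 ω)
          have h3 := hA2' i (x0 ω)
          simp only [hXdef]
          linarith
        have h3sq := bld_three_sq (norm_nonneg (Gc ω)) h1 (by positivity) (abs_nonneg σg)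
          (norm_nonneg (gradient F (x0 ω)))
        have hsg2 : |σg| ^ 2 = σg ^ 2 := sq_abs σg
        rw [hsg2] at h3sq
        calc ‖Gc ω‖ ^ 2 ≤ 3 * (L * ‖X ω‖) ^ 2 + 3 * σg ^ 2
              + 3 * ‖gradient F (x0 ω)‖ ^ 2 := h3sq
        _ = 3 * L ^ 2 * ‖X ω‖ ^ 2 + 3 * σg ^ 2 + 3 * ‖gradient F (x0 ω)‖ ^ 2 := by ring
      calc ∫ ω, ‖Gc ω‖ ^ 2 ∂μ
          ≤ ∫ ω, (3 * L ^ 2 * ‖X ω‖ ^ 2 + 3 * σg ^ 2 + 3 * ‖gradient F (x0 ω)‖ ^ 2) ∂μ :=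
            integral_mono hintG2
              (((hintX2.const_mul _).add (integrable_const _)).add (hintGF2.const_mul _)) hpt
      _ = 3 * L ^ 2 * a i k + 3 * σg ^ 2 + 3 * GFI := by
            have hJ1 : Integrable (fun ω => 3 * L ^ 2 * ‖X ω‖ ^ 2) μ := hintX2.const_mul _
            have hJ2 : Integrable (fun ω => 3 * L ^ 2 * ‖X ω‖ ^ 2 + 3 * σg ^ 2) μ :=
              hJ1.add (integrable_const _)
            have hJ3 : Integrable (fun ω => 3 * ‖gradient F (x0 ω)‖ ^ 2) μ :=
              hintGF2.const_mul _
            rw [integral_add hJ2 hJ3, integral_add hJ1 (integrable_const _),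
              integral_const_mul, integral_const_mul, integral_const, hadef, hGFIdef]
            simp [measure_univ]
            rw [integral_const_mul]
    -- combine
    have h2Keta : (0:ℝ) ≤ 2 * K * ηl ^ 2 := by positivity
    have hmul := mul_le_mul_of_nonneg_left hGbound h2Keta
    have hZmul := mul_le_mul_of_nonneg_left hZvar (sq_nonneg ηl)
    rw [hexpand]
    nlinarith [hAbound, hmul, hZmul]
  -- constants
  have h8KL : ηl * (8 * K * L) ≤ 1 := by
    have hpos : (0:ℝ) < 8 * K * L := by positivity
    rw [le_div_iff₀ hpos] at hηl
    exact hηl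
  set c : ℝ := 1 + (19/16) * t with hcdef
  have hc1 : (1:ℝ) ≤ c := by
    rw [hcdef]; nlinarith [ht0]
  have hc0 : (0:ℝ) ≤ c := by linarith
  have hcc : 1 + t + 6 * K * ηl ^ 2 * L ^ 2 ≤ c := by
    rw [hcdef]
    have h8KL0 : (0:ℝ) ≤ ηl * (8 * K * L) := by positivity
    have h64 : 64 * (K:ℝ) ^ 2 * L ^ 2 * ηl ^ 2 ≤ 1 := by nlinarith [h8KL, h8KL0]
    have hkey : 6 * K * ηl ^ 2 * L ^ 2 * (2 * K - 1) ≤ 3 / 16 := by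
      nlinarith [sq_nonneg ((K:ℝ) * ηl * L), h2K1, hKR]
    have : 6 * (K:ℝ) * ηl ^ 2 * L ^ 2 ≤ (3/16) * t := by
      rw [htdef, show (3:ℝ)/16 * (2*(K:ℝ)-1)⁻¹ = (3/16)/(2*(K:ℝ)-1) by ring,
        le_div_iff₀ h2K1]
      linarith [hkey]
    linarith
  set β : ℝ := ηl ^ 2 * σl ^ 2 + 6 * K * ηl ^ 2 * σg ^ 2 + 6 * K * ηl ^ 2 * GFI with hβdef
  have hβ0 : 0 ≤ β := by
    have hσl2 : (0:ℝ) ≤ σl ^ 2 := sq_nonneg _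
    have hσg2 : (0:ℝ) ≤ σg ^ 2 := sq_nonneg _
    rw [hβdef]; positivity
  -- induction
  have hD : ∀ k, (N:ℝ)⁻¹ * ∑ i, a i k ≤ β * ∑ j ∈ Finset.range k, c ^ j := by
    intro k
    induction k with
    | zero =>
      have : ∀ i : Fin N, a i 0 = 0 := by
        intro i
        rw [hadef]
        simp [hinit i]
      simp [this]
    | succ k ih =>
      have hsum : ∑ i, a i (k+1) ≤ ∑ i : Fin N, (c * a i k + β) := by
        refine Finset.sum_le_sum fun i _ => ?_
        have h1 := hstep i k
        have h2 : (1 + t + 6 * K * ηl ^ 2 * L ^ 2) * a i k ≤ c * a i k :=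
          mul_le_mul_of_nonneg_right hcc (ha0 i k)
        rw [hβdef]
        linarith
      have hsum2 : ∑ i : Fin N, (c * a i k + β) = c * (∑ i, a i k) + N * β := by
        rw [Finset.sum_add_distrib, Finset.mul_sum, Finset.sum_const, Finset.card_univ,
          Fintype.card_fin]
        simp [nsmul_eq_mul]
      have hmono : (N:ℝ)⁻¹ * ∑ i, a i (k+1) ≤ (N:ℝ)⁻¹ * (c * (∑ i, a i k) + N * β) := by
        refine mul_le_mul_of_nonneg_left ?_ (by positivity)
        rw [← hsum2]; exact hsum
      have hNne : (N:ℝ) ≠ 0 := ne_of_gt hNR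
      have hfin : (N:ℝ)⁻¹ * (c * (∑ i, a i k) + N * β)
          = c * ((N:ℝ)⁻¹ * ∑ i, a i k) + β := by
        have : (N:ℝ)⁻¹ * ((N:ℝ) * β) = β := by
          rw [← mul_assoc, inv_mul_cancel₀ hNne, one_mul]
        calc (N:ℝ)⁻¹ * (c * (∑ i, a i k) + N * β)
            = c * ((N:ℝ)⁻¹ * ∑ i, a i k) + (N:ℝ)⁻¹ * ((N:ℝ) * β) := by ring
        _ = c * ((N:ℝ)⁻¹ * ∑ i, a i k) + β := by rw [this]
      have hgeo : c * (β * ∑ j ∈ Finset.range k, c ^ j) + β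
          = β * ∑ j ∈ Finset.range (k+1), c ^ j := by
        rw [geom_sum_succ]
        ring
      calc (N:ℝ)⁻¹ * ∑ i, a i (k+1) ≤ c * ((N:ℝ)⁻¹ * ∑ i, a i k) + β := by
            rw [← hfin]; exact hmono
      _ ≤ c * (β * ∑ j ∈ Finset.range k, c ^ j) + β := by
            have := mul_le_mul_of_nonneg_left ih hc0
            linarith
      _ = β * ∑ j ∈ Finset.range (k+1), c ^ j := hgeo
  -- geometric sum bound
  have hgeom : ∀ k, k ≤ K → (∑ j ∈ Finset.range k, c ^ j) ≤ 5 * K := by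
    intro k hkK
    have hterm : ∀ j ∈ Finset.range K, c ^ j ≤ c ^ (K - 1) := by
      intro j hj
      rw [Finset.mem_range] at hj
      exact pow_le_pow_right₀ hc1 (by omega)
    have hsub : (∑ j ∈ Finset.range k, c ^ j) ≤ ∑ j ∈ Finset.range K, c ^ j := by
      refine Finset.sum_le_sum_of_subset_of_nonneg (Finset.range_subset_range.mpr hkK) ?_
      intro j _ _
      positivity
    have hKsum : (∑ j ∈ Finset.range K, c ^ j) ≤ K * c ^ (K - 1) := by
      calc (∑ j ∈ Finset.range K, c ^ j) ≤ ∑ _j ∈ Finset.range K, c ^ (K - 1) :=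
            Finset.sum_le_sum hterm
      _ = K * c ^ (K - 1) := by simp [Finset.sum_const, nsmul_eq_mul]
    -- bound c ^ (K-1)
    have hcpow : c ^ (K - 1) ≤ 32 / 13 := by
      set n := K - 1 with hndef
      set ε : ℝ := (19/16) * t with hεdef
      have hε0 : 0 < ε := by rw [hεdef]; positivity
      have hε2 : ε ≤ 19/16 := by rw [hεdef]; nlinarith [ht1, ht0]
      have hnε : (n:ℝ) * ε ≤ 19/32 := by
        have hnt : (n:ℝ) * t ≤ 1/2 := by
          rw [htdef, mul_inv_le_iff₀ h2K1]
          have : ((n:ℝ)) = (K:ℝ) - 1 := by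
            rw [hndef]; push_cast [Nat.cast_sub hK]; ring
          rw [this]; linarith
        rw [hεdef]; nlinarith [ht0, (Nat.cast_nonneg n : (0:ℝ) ≤ n)]
      have hB1 : 1 - (n:ℝ) * ε ≤ (1 - ε) ^ n := by
        have := one_add_mul_le_pow (a := -ε) (by linarith) n
        simpa [mul_neg, sub_eq_add_neg] using this
      have hB2 : (1 + ε) ^ n * (1 - ε) ^ n ≤ 1 := by
        rw [← mul_pow]
        have h1 : (1 + ε) * (1 - ε) = 1 - ε ^ 2 := by ring
        rw [h1]
        calc (1 - ε ^ 2) ^ n ≤ |1 - ε ^ 2| ^ n := by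
              rw [← abs_pow]; exact le_abs_self _
        _ ≤ 1 := by
              refine pow_le_one₀ (abs_nonneg _) ?_
              rw [abs_le]
              constructor <;> nlinarith [hε0, hε2]
      have hB4 : (0:ℝ) ≤ (1 + ε) ^ n := by positivity
      have hfin : (1 + ε) ^ n ≤ 32 / 13 := by
        nlinarith [mul_le_mul_of_nonneg_left hB1 hB4, hB2, hnε, hB4]
      rw [hcdef]
      exact hfin
    have hKc : (K:ℝ) * c ^ (K - 1) ≤ 5 * K := by
      have h5 : c ^ (K - 1) ≤ 5 := by linarith [hcpow]
      nlinarith [hKR, hcpow]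
    linarith
  -- conclusion
  intro k hk1 hkK
  have h1 := hD k
  have h2 : β * (∑ j ∈ Finset.range k, c ^ j) ≤ β * (5 * K) :=
    mul_le_mul_of_nonneg_left (hgeom k hkK) hβ0
  have h3 : β * (5 * K) = 5 * K * ηl ^ 2 * (σl ^ 2 + 6 * K * σg ^ 2)
      + 30 * K ^ 2 * ηl ^ 2 * GFI := by
    rw [hβdef]; ring
  calc (N : ℝ)⁻¹ * ∑ i, ∫ ω, ‖xloc i k ω - x0 ω‖ ^ 2 ∂μ
      = (N:ℝ)⁻¹ * ∑ i, a i k := by rw [hadef]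
  _ ≤ β * ∑ j ∈ Finset.range k, c ^ j := h1
  _ ≤ β * (5 * K) := h2
  _ = _ := by rw [h3, hGFIdef]
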